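/- Let F ∈ AF^ℕ be homogeneous and universal, meaning every finite quiver T on {0,…,n-1} (for every n) embeds into F as a full subquiver. Then for every Q ∈ AF^ℕ there exists an infinite sequence i : ℕ → ℕ (indexed from 1) such that the sequence n ↦ μ_{i_n} ∘ ⋯ ∘ μ_{i_1}(F) converges to Q in the weak topology on AF^ℕ. -/

import Mathlib

-- Mutation of a quiver at a vertex `x`.
open Classical in
noncomputable def mutateFun {X : Type*} (x : X) (Q : X → X → ℤ) : X → X → ℤ :=
  fun v w =>
    if v = x ∨ w = x then - Q v w
    else Q v w + Q v x * max (Q x w) 0 + max (- Q v x) 0 * Q x w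

-- Restriction of a quiver to a set of vertices `V`.
open Classical in
noncomputable def restrictFun {X : Type*} (V : Set X) (Q : X → X → ℤ) : X → X → ℤ :=
  fun a b => if a ∈ V ∧ b ∈ V then Q a b else 0

-- Overfill of a quiver on a set of vertices `V`.
open Classical in
noncomputable def overfillFun {X : Type*} (V : Set X) (Q : X → X → ℤ) : X → X → ℤ :=
  fun a b => if a ∈ V ∨ b ∈ V then Q a b else 0

/-- The set of arrow finite quivers on `X`: skew-symmetric integer matrices. -/
def AF (X : Type*) : Type _ := {Q : X → X → ℤ // ∀ a b, Q a b = - Q b a}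

/-- The basic set `U_{Q,V}`. -/
def Uset {X : Type*} (Q : AF X) (V : Set X) : Set (AF X) :=
  {Q' | restrictFun V Q'.1 = restrictFun V Q.1}

/-- The basic set `W_{Q,V}`. -/
def Wset {X : Type*} (Q : AF X) (V : Set X) : Set (AF X) :=
  {Q' | overfillFun V Q'.1 = overfillFun V Q.1}

def UBasis (X : Type*) : Set (Set (AF X)) :=
  {U | ∃ (Q : AF X) (V : Set X), V.Finite ∧ U = Uset Q V}

def WBasis (X : Type*) : Set (Set (AF X)) :=
  {U | ∃ (Q : AF X) (V : Set X), V.Finite ∧ U = Wset Q V}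

/-- The weak topology on `AF X`, generated by the sets `U_{Q,V}` with `V` finite. -/
def weakTop (X : Type*) : TopologicalSpace (AF X) :=
  TopologicalSpace.generateFrom (UBasis X)

/-- The strong topology on `AF X`, generated by the sets `W_{Q,V}` with `V` finite. -/
def strongTop (X : Type*) : TopologicalSpace (AF X) :=
  TopologicalSpace.generateFrom (WBasis X)

/-- Locally finite quivers. -/
def LFset (X : Type*) : Set (AF X) := {Q | ∀ x : X, {y : X | Q.1 x y ≠ 0}.Finite}

/-- Finite quivers: those with finite support. -/
def FinSet (X : Type*) : Set (AF X) := {Q | {x : X | ∃ y, Q.1 x y ≠ 0}.Finite}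

/-- Mutation as a map `AF X → AF X`. -/
noncomputable def AF.mut {X : Type*} (x : X) (Q : AF X) : AF X :=
  ⟨mutateFun x Q.1, by
    intro a b
    have h := Q.2
    simp only [mutateFun]
    by_cases ha : a = x
    · rw [if_pos (Or.inl ha), if_pos (Or.inr ha), h a b]
    · by_cases hb : b = x
      · rw [if_pos (Or.inr hb), if_pos (Or.inl hb), h a b]
      · rw [if_neg (fun hc => hc.elim ha hb), if_neg (fun hc => hc.elim hb ha),
          h b a, h b x, h x a]
        simp only [neg_neg]
        ring⟩

/-- `mutUpTo i Q n = μ_{i n} ∘ ⋯ ∘ μ_{i 1} (Q)` (the sequence `i` is indexed from 1). -/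
noncomputable def mutUpTo {X : Type*} (i : ℕ → X) (Q : AF X) : ℕ → AF X
  | 0 => Q
  | n + 1 => AF.mut (i (n + 1)) (mutUpTo i Q n)

/-- A quiver on `ℕ` is homogeneous if every isomorphism between finite full subquivers
extends to an automorphism. -/
def Homog (Q : AF ℕ) : Prop :=
  ∀ (A B : Set ℕ), A.Finite → B.Finite → ∀ f : ℕ → ℕ, Set.BijOn f A B →
    (∀ a ∈ A, ∀ a' ∈ A, Q.1 (f a) (f a') = Q.1 a a') →
    ∃ F : ℕ ≃ ℕ, (∀ a ∈ A, F a = f a) ∧ ∀ x y, Q.1 (F x) (F y) = Q.1 x y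

/-- A finite abstract quiver on `Fin n` embeds into `Q ∈ AF ℕ` as a full subquiver. -/
def EmbedsFin {n : ℕ} (T : AF (Fin n)) (Q : AF ℕ) : Prop :=
  ∃ f : Fin n → ℕ, Function.Injective f ∧ ∀ a b, Q.1 (f a) (f b) = T.1 a b


/-! ### Auxiliary lemmas for the main theorem -/

section FraisseAux

lemma AF.diag {X : Type*} (Q : AF X) (a : X) : Q.1 a a = 0 := by
  have := Q.2 a a; omega

lemma mutateFun_eval (x : ℕ) (Qf : ℕ → ℕ → ℤ) {v w : ℕ} (hv : v ≠ x) (hw : w ≠ x) :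
    mutateFun x Qf v w
      = Qf v w + Qf v x * max (Qf x w) 0 + max (-Qf v x) 0 * Qf x w := by
  rw [mutateFun, if_neg (by tauto : ¬ (v = x ∨ w = x))]

lemma mutateFun_pos (x : ℕ) (Qf : ℕ → ℕ → ℤ) {v w : ℕ} (h : v = x ∨ w = x) :
    mutateFun x Qf v w = - Qf v w := by
  rw [mutateFun, if_pos h]

lemma mutateFun_right (x : ℕ) (Qf : ℕ → ℕ → ℤ) (v : ℕ) :
    mutateFun x Qf v x = - Qf v x := by
  rw [mutateFun, if_pos (Or.inr rfl)]

lemma mutateFun_left (x : ℕ) (Qf : ℕ → ℕ → ℤ) (w : ℕ) :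
    mutateFun x Qf x w = - Qf x w := by
  rw [mutateFun, if_pos (Or.inl rfl)]

lemma mut_eval (x : ℕ) (Q : AF ℕ) {v w : ℕ} (hv : v ≠ x) (hw : w ≠ x) :
    (AF.mut x Q).1 v w
      = Q.1 v w + Q.1 v x * max (Q.1 x w) 0 + max (-Q.1 v x) 0 * Q.1 x w := by
  show mutateFun x Q.1 v w = _
  exact mutateFun_eval x Q.1 hv hw

lemma mut_mut (x : ℕ) (Q : AF ℕ) : AF.mut x (AF.mut x Q) = Q := by
  apply Subtype.ext
  funext v w
  show mutateFun x (mutateFun x Q.1) v w = Q.1 v w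
  by_cases h : v = x ∨ w = x
  · rw [mutateFun_pos x _ h, mutateFun_pos x _ h, neg_neg]
  · push_neg at h
    rw [mutateFun_eval x _ h.1 h.2, mutateFun_eval x Q.1 h.1 h.2,
      mutateFun_right, mutateFun_left, neg_neg]
    rcases le_total 0 (Q.1 v x) with ha | ha <;> rcases le_total 0 (Q.1 x w) with hb | hb
    · rw [max_eq_left hb, max_eq_right (by linarith : -Q.1 v x ≤ 0),
        max_eq_right (by linarith : -Q.1 x w ≤ 0), max_eq_left ha]
      ring
    · rw [max_eq_right hb, max_eq_right (by linarith : -Q.1 v x ≤ 0),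
        max_eq_left (by linarith : (0:ℤ) ≤ -Q.1 x w), max_eq_left ha]
      ring
    · rw [max_eq_left hb, max_eq_left (by linarith : (0:ℤ) ≤ -Q.1 v x),
        max_eq_right (by linarith : -Q.1 x w ≤ 0), max_eq_right ha]
      ring
    · rw [max_eq_right hb, max_eq_left (by linarith : (0:ℤ) ≤ -Q.1 v x),
        max_eq_left (by linarith : (0:ℤ) ≤ -Q.1 x w), max_eq_right ha]
      ring

/-- Applying a word of mutations from the left. -/
noncomputable def applyWord (l : List ℕ) (Q : AF ℕ) : AF ℕ :=
  l.foldl (fun R x => AF.mut x R) Q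

lemma applyWord_nil (Q : AF ℕ) : applyWord [] Q = Q := rfl

lemma applyWord_cons (y : ℕ) (l : List ℕ) (Q : AF ℕ) :
    applyWord (y :: l) Q = applyWord l (AF.mut y Q) := rfl

lemma applyWord_concat (l : List ℕ) (x : ℕ) (Q : AF ℕ) :
    applyWord (l ++ [x]) Q = AF.mut x (applyWord l Q) := by
  simp [applyWord, List.foldl_append]

lemma applyWord_reverse (l : List ℕ) (Q : AF ℕ) :
    applyWord l.reverse (applyWord l Q) = Q := by
  induction l generalizing Q with
  | nil => rfl
  | cons y t ih =>
    rw [applyWord_cons, List.reverse_cons, applyWord_concat, ih (AF.mut y Q), mut_mut]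

lemma applyWord_reverse' (l : List ℕ) (Q : AF ℕ) :
    applyWord l (applyWord l.reverse Q) = Q := by
  have h := applyWord_reverse l.reverse Q
  rwa [List.reverse_reverse] at h

lemma mut_map (Q1 Q2 : AF ℕ) (g : ℕ → ℕ) (S : Set ℕ) (hg : Set.InjOn g S)
    {z : ℕ} (hz : z ∈ S)
    (h : ∀ a ∈ S, ∀ b ∈ S, Q1.1 (g a) (g b) = Q2.1 a b) :
    ∀ a ∈ S, ∀ b ∈ S, (AF.mut (g z) Q1).1 (g a) (g b) = (AF.mut z Q2).1 a b := by
  intro a ha b hb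
  show mutateFun (g z) Q1.1 (g a) (g b) = mutateFun z Q2.1 a b
  have h1 : g a = g z ↔ a = z := ⟨fun e => hg ha hz e, fun e => by rw [e]⟩
  have h2 : g b = g z ↔ b = z := ⟨fun e => hg hb hz e, fun e => by rw [e]⟩
  by_cases hc : a = z ∨ b = z
  · rw [mutateFun, mutateFun]
    rw [if_pos (by tauto : g a = g z ∨ g b = g z), if_pos hc, h a ha b hb]
  · rw [mutateFun, mutateFun]
    rw [if_neg (by tauto : ¬ (g a = g z ∨ g b = g z)), if_neg hc,
      h a ha b hb, h a ha z hz, h z hz b hb]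

lemma applyWord_map (l : List ℕ) (Q1 Q2 : AF ℕ) (g : ℕ → ℕ) (S : Set ℕ)
    (hg : Set.InjOn g S) (hl : ∀ y ∈ l, y ∈ S) (hfix : ∀ y ∈ l, g y = y)
    (h : ∀ a ∈ S, ∀ b ∈ S, Q1.1 (g a) (g b) = Q2.1 a b) :
    ∀ a ∈ S, ∀ b ∈ S, (applyWord l Q1).1 (g a) (g b) = (applyWord l Q2).1 a b := by
  induction l generalizing Q1 Q2 with
  | nil => exact h
  | cons y t ih =>
    have hy : y ∈ S := hl y (List.mem_cons_self)
    have h' := mut_map Q1 Q2 g S hg hy h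
    rw [hfix y (List.mem_cons_self)] at h'
    simp only [applyWord_cons]
    exact ih (AF.mut y Q1) (AF.mut y Q2)
      (fun y' hy' => hl y' (List.mem_cons_of_mem y hy'))
      (fun y' hy' => hfix y' (List.mem_cons_of_mem y hy')) h'

lemma le_pair_left (a b : ℕ) : a ≤ Nat.pair a b := by
  unfold Nat.pair
  split_ifs with h
  · linarith [Nat.zero_le (b * b)]
  · linarith [Nat.zero_le (a * a), Nat.zero_le b]

lemma le_pair_right (a b : ℕ) : b ≤ Nat.pair a b := by
  unfold Nat.pair
  split_ifs with h
  · have hb1 : 1 ≤ b := by omega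
    have : b * 1 ≤ b * b := Nat.mul_le_mul_left b hb1
    linarith [Nat.zero_le a]
  · linarith [Nat.zero_le (a * a), Nat.zero_le a]

lemma pair_le_pair {a b N : ℕ} (ha : a ≤ N) (hb : b ≤ N) :
    Nat.pair a b ≤ Nat.pair N N := by
  have hbb : b * b ≤ N * N := Nat.mul_le_mul hb hb
  have haa : a * a ≤ N * N := Nat.mul_le_mul ha ha
  unfold Nat.pair
  split_ifs <;> linarith

/-- The one-point extension property of a homogeneous universal quiver. -/
lemma ext0 (F : AF ℕ) (hH : Homog F)
    (hU : ∀ (n : ℕ) (T : AF (Fin n)), EmbedsFin T F)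
    (A : Finset ℕ) (c : ℕ → ℤ) :
    ∃ x, x ∉ A ∧ ∀ u ∈ A, F.1 x u = c u := by
  classical
  set n := A.card with hn
  set e : Fin n → ℕ := fun i => ((A.equivFin.symm i : A) : ℕ) with he
  have heA : ∀ i, e i ∈ A := fun i => (A.equivFin.symm i).2
  have heinj : Function.Injective e := fun i j hij =>
    A.equivFin.symm.injective (Subtype.coe_injective hij)
  have hesurj : ∀ u ∈ A, ∃ i, e i = u := fun u hu =>
    ⟨A.equivFin ⟨u, hu⟩, by simp [he]⟩
  have hTex : ∃ T : AF (Fin (n+1)),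
      (∀ i j : Fin n, T.1 i.castSucc j.castSucc = F.1 (e i) (e j)) ∧
      (∀ j : Fin n, T.1 (Fin.last n) j.castSucc = c (e j)) := by
    have hlt : ∀ i : Fin n, ((i.castSucc : Fin (n+1)) : ℕ) < n := fun i => i.isLt
    have hnlt : ¬ (((Fin.last n : Fin (n+1))) : ℕ) < n := by simp
    refine ⟨⟨fun i j =>
      if hi : (i : ℕ) < n then
        (if hj : (j : ℕ) < n then F.1 (e ⟨i, hi⟩) (e ⟨j, hj⟩) else - c (e ⟨i, hi⟩))
      else (if hj : (j : ℕ) < n then c (e ⟨j, hj⟩) else 0), ?_⟩, ?_, ?_⟩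
    · intro a b
      dsimp only
      by_cases hi : (a : ℕ) < n <;> by_cases hj : (b : ℕ) < n
      · rw [dif_pos hi, dif_pos hj, dif_pos hj, dif_pos hi]; exact F.2 _ _
      · rw [dif_pos hi, dif_neg hj, dif_neg hj, dif_pos hi]
      · rw [dif_neg hi, dif_pos hj, dif_pos hj, dif_neg hi]; ring
      · rw [dif_neg hi, dif_neg hj, dif_neg hj, dif_neg hi]; ring
    · intro i j
      show (if hi : ((i.castSucc : Fin (n+1)) : ℕ) < n then _ else _) = _
      rw [dif_pos (hlt i), dif_pos (hlt j)]
      exact congrArg₂ (fun p q => F.1 (e p) (e q)) (Fin.ext (by simp)) (Fin.ext (by simp))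
    · intro j
      show (if hi : (((Fin.last n : Fin (n+1))) : ℕ) < n then _ else _) = _
      rw [dif_neg hnlt, dif_pos (hlt j)]
      exact congrArg (fun p => c (e p)) (Fin.ext (by simp))
  obtain ⟨T, hT1, hT2⟩ := hTex
  obtain ⟨f, hfinj, hfemb⟩ := hU (n+1) T
  set φ : ℕ → ℕ := fun y =>
    if h : ∃ i : Fin n, f i.castSucc = y then e h.choose else y with hφ
  have hφspec : ∀ i : Fin n, φ (f i.castSucc) = e i := by
    intro i
    have hex : ∃ i' : Fin n, f i'.castSucc = f i.castSucc := ⟨i, rfl⟩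
    have : hex.choose = i := by
      have hc := hex.choose_spec
      have := hfinj hc
      exact Fin.castSucc_injective n this
    simp only [hφ, dif_pos hex, this]
  set Aset : Set ℕ := Set.range (fun i : Fin n => f i.castSucc) with hAset
  have hbij : Set.BijOn φ Aset ↑A := by
    refine ⟨?_, ?_, ?_⟩
    · rintro y ⟨i, rfl⟩
      rw [hφspec i]
      exact Finset.mem_coe.mpr (heA i)
    · rintro y ⟨i, rfl⟩ y' ⟨j, rfl⟩ hij
      rw [hφspec i, hφspec j] at hij
      rw [heinj hij]
    · intro u hu
      obtain ⟨i, hi⟩ := hesurj u (Finset.mem_coe.mp hu)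
      exact ⟨f i.castSucc, ⟨i, rfl⟩, by rw [hφspec i, hi]⟩
  have harrow : ∀ a ∈ Aset, ∀ a' ∈ Aset, F.1 (φ a) (φ a') = F.1 a a' := by
    rintro a ⟨i, rfl⟩ a' ⟨j, rfl⟩
    rw [hφspec i, hφspec j, ← hT1 i j, ← hfemb]
  obtain ⟨Φ, hΦ1, hΦ2⟩ := hH Aset ↑A (Set.finite_range _) A.finite_toSet φ hbij harrow
  have hΦe : ∀ i : Fin n, Φ (f i.castSucc) = e i := fun i => by
    rw [hΦ1 _ ⟨i, rfl⟩, hφspec i]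
  refine ⟨Φ (f (Fin.last n)), ?_, ?_⟩
  · intro hx
    obtain ⟨i, hi⟩ := hesurj _ hx
    have h1 : Φ (f i.castSucc) = Φ (f (Fin.last n)) := by rw [hΦe i, hi]
    have h2 := hfinj (Φ.injective h1)
    exact absurd h2 (Fin.ne_of_lt (Fin.castSucc_lt_last i))
  · intro u hu
    obtain ⟨i, hi⟩ := hesurj u hu
    calc F.1 (Φ (f (Fin.last n))) u
        = F.1 (Φ (f (Fin.last n))) (Φ (f i.castSucc)) := by rw [hΦe i, hi]
      _ = F.1 (f (Fin.last n)) (f i.castSucc) := hΦ2 _ _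
      _ = T.1 (Fin.last n) i.castSucc := hfemb _ _
      _ = c (e i) := hT2 i
      _ = c u := by rw [hi]

/-- The one-point extension property of any finite mutation of a homogeneous
universal quiver. -/
lemma extStep (F : AF ℕ) (hH : Homog F)
    (hU : ∀ (n : ℕ) (T : AF (Fin n)), EmbedsFin T F)
    (l : List ℕ) (A : Finset ℕ) (hl : ∀ y ∈ l, y ∈ A) (c : ℕ → ℤ) :
    ∃ x, x ∉ A ∧ ∀ u ∈ A, (applyWord l F).1 x u = c u := by
  classical
  obtain ⟨z, hz⟩ := Infinite.exists_notMem_finset A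
  set R := applyWord l F with hR
  have hEex : ∃ E : AF ℕ,
      (∀ a b : ℕ, a ≠ z → b ≠ z → E.1 a b = R.1 a b) ∧
      (∀ b : ℕ, b ≠ z → E.1 z b = c b) := by
    refine ⟨⟨fun a b =>
      if a = z then (if b = z then 0 else c b)
      else if b = z then - c a else R.1 a b, ?_⟩, ?_, ?_⟩
    · intro a b
      dsimp only
      by_cases haz : a = z <;> by_cases hbz : b = z
      · rw [if_pos haz, if_pos hbz, if_pos hbz, if_pos haz]
        ring
      · rw [if_pos haz, if_neg hbz, if_neg hbz, if_pos haz]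
        ring
      · rw [if_neg haz, if_pos hbz, if_pos hbz, if_neg haz]
      · rw [if_neg haz, if_neg hbz, if_neg hbz, if_neg haz]
        exact R.2 a b
    · intro a b ha hb
      show (if a = z then _ else _) = _
      rw [if_neg ha, if_neg hb]
    · intro b hb
      show (if z = z then _ else _) = _
      rw [if_pos rfl, if_neg hb]
  obtain ⟨E, hE1, hE2⟩ := hEex
  set S : Set ℕ := {y : ℕ | y ≠ z} with hS
  have hlS : ∀ y ∈ l.reverse, y ∈ S := by
    intro y hy
    have : y ∈ A := hl y (List.mem_reverse.mp hy)
    intro hyz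
    exact hz (hyz ▸ this)
  have hagree : ∀ a ∈ S, ∀ b ∈ S, E.1 (id a) (id b) = R.1 a b := by
    intro a ha b hb
    exact hE1 a b ha hb
  have hEF : ∀ a ∈ S, ∀ b ∈ S,
      (applyWord l.reverse E).1 a b = F.1 a b := by
    intro a ha b hb
    have h := applyWord_map l.reverse E R id S (Set.injOn_id S) hlS
      (fun _ _ => rfl) hagree a ha b hb
    simp only [id] at h
    rw [h, hR, applyWord_reverse]
  set E' := applyWord l.reverse E with hE'
  obtain ⟨x, hxA, hxF⟩ := ext0 F hH hU A (fun u => E'.1 z u)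
  set ι : ℕ → ℕ := fun y => if y = z then x else y with hι
  set S₂ : Set ℕ := insert z ↑A with hS₂
  have hmemS₂ : ∀ u ∈ A, u ∈ S₂ := fun u hu => Set.mem_insert_of_mem z hu
  have hinj : Set.InjOn ι S₂ := by
    intro a ha b hb hab
    by_cases az : a = z <;> by_cases bz : b = z
    · rw [az, bz]
    · exfalso
      rw [hι] at hab
      simp only [if_pos az, if_neg bz] at hab
      have hbA : b ∈ A := by
        rcases (Set.mem_insert_iff.mp hb) with h | h
        · exact absurd h bz
        · exact h
      exact hxA (hab ▸ hbA)
    · exfalso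
      rw [hι] at hab
      simp only [if_neg az, if_pos bz] at hab
      have haA : a ∈ A := by
        rcases (Set.mem_insert_iff.mp ha) with h | h
        · exact absurd h az
        · exact h
      exact hxA (hab ▸ haA)
    · rw [hι] at hab
      simpa only [if_neg az, if_neg bz] using hab
  have hιz : ι z = x := by rw [hι]; simp
  have hιu : ∀ u, u ≠ z → ι u = u := fun u hu => by rw [hι]; simp [hu]
  have hmain : ∀ a ∈ S₂, ∀ b ∈ S₂, F.1 (ι a) (ι b) = E'.1 a b := by
    intro a ha b hb
    by_cases az : a = z <;> by_cases bz : b = z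
    · rw [az, bz, hιz, AF.diag, AF.diag]
    · have hbA : b ∈ A := by
        rcases (Set.mem_insert_iff.mp hb) with h | h
        · exact absurd h bz
        · exact h
      rw [az, hιz, hιu b bz]
      exact hxF b hbA
    · have haA : a ∈ A := by
        rcases (Set.mem_insert_iff.mp ha) with h | h
        · exact absurd h az
        · exact h
      rw [bz, hιz, hιu a az]
      calc F.1 a x = - F.1 x a := F.2 a x
        _ = - E'.1 z a := by rw [hxF a haA]
        _ = E'.1 a z := (E'.2 a z).symm
    · rw [hιu a az, hιu b bz]
      exact (hEF a az b bz).symm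
  have hword := applyWord_map l F E' ι S₂ hinj
    (fun y hy => hmemS₂ y (hl y hy))
    (fun y hy => hιu y (fun hyz => hz (hyz ▸ hl y hy)))
    hmain
  refine ⟨x, hxA, ?_⟩
  intro u hu
  have huz : u ≠ z := fun hyz => hz (hyz ▸ hu)
  have h := hword z (Set.mem_insert z ↑A) u (hmemS₂ u hu)
  rw [hιz, hιu u huz] at h
  have hE'back : applyWord l E' = E := by
    rw [hE', applyWord_reverse']
  rw [← hR] at h
  rw [h, hE'back, hE2 u huz]

/-- Recursively build the list of mutation vertices. -/
noncomputable def seqAux (xf : List ℕ → ℕ → ℕ) : ℕ → List ℕ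
  | 0 => []
  | n+1 => seqAux xf n ++ [xf (seqAux xf n) n]

end FraisseAux

/-- If `F` is homogeneous and universal, then every `Q ∈ AF^ℕ` is the limit in the weak
topology of some infinite mutation sequence applied to `F`. -/
theorem fraisse_infinite_mutation (F : AF ℕ) (hH : Homog F)
    (hU : ∀ (n : ℕ) (T : AF (Fin n)), EmbedsFin T F) :
    ∀ Q : AF ℕ, ∃ i : ℕ → ℕ,
      Filter.Tendsto (fun n => mutUpTo i F n) Filter.atTop (@nhds _ (weakTop ℕ) Q) := by
  intro Q
  classical
  -- choose, for every word `l` and stage `n`, a fresh gadget vertex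
  have hchoice : ∀ (l : List ℕ) (n : ℕ), ∃ x : ℕ,
      x ∉ (Finset.range (n+1) ∪ l.toFinset) ∧
      ∀ u ∈ (Finset.range (n+1) ∪ l.toFinset),
        (applyWord l F).1 x u =
          (if u = (Nat.unpair n).2 then
            (if 0 ≤ Q.1 (Nat.unpair n).1 (Nat.unpair n).2
                - (applyWord l F).1 (Nat.unpair n).1 (Nat.unpair n).2 then 1 else -1)
          else if u = (Nat.unpair n).1 then
            -(Q.1 (Nat.unpair n).1 (Nat.unpair n).2
                - (applyWord l F).1 (Nat.unpair n).1 (Nat.unpair n).2)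
          else 0) := by
    intro l n
    exact extStep F hH hU l _
      (fun y hy => Finset.mem_union_right _ (List.mem_toFinset.mpr hy)) _
  choose xf hxf1 hxf2 using hchoice
  set i : ℕ → ℕ := fun n =>
    Nat.rec (motive := fun _ => ℕ) 0 (fun m _ => xf (seqAux xf m) m) n with hi
  refine ⟨i, ?_⟩
  have hmut : ∀ n, mutUpTo i F n = applyWord (seqAux xf n) F := by
    intro n
    induction n with
    | zero => rfl
    | succ m ih =>
      show AF.mut (i (m+1)) (mutUpTo i F m) = _
      rw [ih]
      show AF.mut (xf (seqAux xf m) m) (applyWord (seqAux xf m) F)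
        = applyWord (seqAux xf (m+1)) F
      rw [show seqAux xf (m+1) = seqAux xf m ++ [xf (seqAux xf m) m] from rfl,
        applyWord_concat]
  have hsucc : ∀ n, applyWord (seqAux xf (n+1)) F
      = AF.mut (xf (seqAux xf n) n) (applyWord (seqAux xf n) F) := by
    intro n
    rw [show seqAux xf (n+1) = seqAux xf n ++ [xf (seqAux xf n) n] from rfl,
      applyWord_concat]
  have hmemA : ∀ n a, a ≤ n →
      a ∈ Finset.range (n+1) ∪ (seqAux xf n).toFinset := fun n a ha =>
    Finset.mem_union_left _ (Finset.mem_range.mpr (by omega))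
  have hxnotin : ∀ n a, a ≤ n → a ≠ xf (seqAux xf n) n := by
    intro n a ha h
    exact hxf1 (seqAux xf n) n (h ▸ hmemA n a ha)
  -- one mutation step fixes the current pair
  have hstep_fix : ∀ n,
      (applyWord (seqAux xf (n+1)) F).1 (Nat.unpair n).1 (Nat.unpair n).2
        = Q.1 (Nat.unpair n).1 (Nat.unpair n).2 := by
    intro n
    set v := (Nat.unpair n).1 with hv
    set w := (Nat.unpair n).2 with hw
    set l := seqAux xf n with hl
    set R := applyWord l F with hRdef
    set x := xf l n with hx
    have hvn : v ≤ n := Nat.unpair_left_le n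
    have hwn : w ≤ n := Nat.unpair_right_le n
    rw [hsucc n]
    by_cases hvw : v = w
    · rw [hvw, AF.diag, AF.diag]
    · have hxv := hxf2 l n v (hmemA n v hvn)
      have hxw := hxf2 l n w (hmemA n w hwn)
      rw [if_neg hvw, if_pos rfl] at hxv
      rw [if_pos rfl] at hxw
      have hRvx : R.1 v x = Q.1 v w - R.1 v w := by
        rw [R.2 v x, hxv]; ring
      rw [mut_eval x R (hxnotin n v hvn) (hxnotin n w hwn), hRvx, hxw]
      by_cases hd : 0 ≤ Q.1 v w - R.1 v w
      · rw [if_pos hd, max_eq_left (by norm_num : (0:ℤ) ≤ 1),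
          max_eq_right (by linarith : -(Q.1 v w - R.1 v w) ≤ 0)]
        ring
      · rw [if_neg hd, max_eq_right (by norm_num : (-1:ℤ) ≤ 0),
          max_eq_left (by linarith : (0:ℤ) ≤ -(Q.1 v w - R.1 v w))]
        ring
  -- one mutation step does not disturb other pairs in the protected region
  have hstep_keep : ∀ n a b, a ≤ n → b ≤ n →
      ((a ≠ (Nat.unpair n).1 ∧ a ≠ (Nat.unpair n).2) ∨
        (b ≠ (Nat.unpair n).1 ∧ b ≠ (Nat.unpair n).2)) →
      (applyWord (seqAux xf (n+1)) F).1 a b = (applyWord (seqAux xf n) F).1 a b := by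
    intro n a b ha hb hcase
    set l := seqAux xf n with hl
    set R := applyWord l F with hRdef
    set x := xf l n with hx
    rw [hsucc n, mut_eval x R (hxnotin n a ha) (hxnotin n b hb)]
    rcases hcase with ⟨h1, h2⟩ | ⟨h1, h2⟩
    · have hxa := hxf2 l n a (hmemA n a ha)
      rw [if_neg h2, if_neg h1] at hxa
      have hax : R.1 a x = 0 := by rw [R.2 a x, hxa]; ring
      rw [hax]
      simp
    · have hxb := hxf2 l n b (hmemA n b hb)
      rw [if_neg h2, if_neg h1] at hxb
      rw [hxb]
      simp
  -- the key invariant: after `n` steps all pairs with code `< n` are correct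
  have key : ∀ n a b, Nat.pair a b < n →
      (applyWord (seqAux xf n) F).1 a b = Q.1 a b := by
    intro n
    induction n with
    | zero => intro a b h; omega
    | succ m ih =>
      intro a b h
      set v := (Nat.unpair m).1 with hv
      set w := (Nat.unpair m).2 with hw
      rcases Nat.lt_succ_iff_lt_or_eq.mp h with h' | h'
      · have ha : a ≤ m := le_trans (le_pair_left a b) (by omega)
        have hb : b ≤ m := le_trans (le_pair_right a b) (by omega)
        by_cases hab : a = b
        · rw [hab, AF.diag, AF.diag]
        · by_cases hvw1 : a = v ∧ b = w
          · exfalso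
            have : Nat.pair v w = m := Nat.pair_unpair m
            rw [hvw1.1, hvw1.2] at h'
            omega
          · by_cases hvw2 : a = w ∧ b = v
            · rw [hvw2.1, hvw2.2]
              have hfix := hstep_fix m
              calc (applyWord (seqAux xf (m+1)) F).1 w v
                  = - (applyWord (seqAux xf (m+1)) F).1 v w :=
                    (applyWord (seqAux xf (m+1)) F).2 w v
                _ = - Q.1 v w := by rw [hfix]
                _ = Q.1 w v := (Q.2 w v).symm
            · have hdisj : (a ≠ v ∧ a ≠ w) ∨ (b ≠ v ∧ b ≠ w) := by
                by_cases hav : a = v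
                · right
                  refine ⟨fun hbv => hab (hav.trans hbv.symm),
                    fun hbw => hvw1 ⟨hav, hbw⟩⟩
                · by_cases haw : a = w
                  · right
                    refine ⟨fun hbv => hvw2 ⟨haw, hbv⟩,
                      fun hbw => hab (haw.trans hbw.symm)⟩
                  · left; exact ⟨hav, haw⟩
              rw [hstep_keep m a b ha hb hdisj]
              exact ih a b h'
      · have h1 : v = a := by rw [hv, ← h', Nat.unpair_pair]
        have h2 : w = b := by rw [hw, ← h', Nat.unpair_pair]
        rw [← h1, ← h2]
        exact hstep_fix m
  -- conclude convergence in the weak topology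
  show Filter.Tendsto (fun n => mutUpTo i F n) Filter.atTop
    (@nhds _ (TopologicalSpace.generateFrom (UBasis ℕ)) Q)
  rw [TopologicalSpace.nhds_generateFrom]
  rw [Filter.tendsto_iInf]
  intro s
  rw [Filter.tendsto_iInf]
  intro hs
  rw [Filter.tendsto_principal]
  obtain ⟨hQs, Q', V, hVfin, rfl⟩ := hs
  have hQ : restrictFun V Q.1 = restrictFun V Q'.1 := hQs
  obtain ⟨N, hN⟩ : ∃ N : ℕ, ∀ y ∈ V, y ≤ N := by
    rcases V.eq_empty_or_nonempty with h | h
    · exact ⟨0, fun y hy => absurd hy (h ▸ Set.notMem_empty y)⟩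
    · obtain ⟨N, hN⟩ := hVfin.bddAbove
      exact ⟨N, fun y hy => hN hy⟩
  rw [Filter.eventually_atTop]
  refine ⟨Nat.pair N N + 1, fun n hn => ?_⟩
  show restrictFun V (mutUpTo i F n).1 = restrictFun V Q'.1
  rw [← hQ]
  funext a b
  show (if a ∈ V ∧ b ∈ V then (mutUpTo i F n).1 a b else 0)
    = (if a ∈ V ∧ b ∈ V then Q.1 a b else 0)
  by_cases hab : a ∈ V ∧ b ∈ V
  · rw [if_pos hab, if_pos hab, hmut n]
    apply key
    have := pair_le_pair (hN a hab.1) (hN b hab.2)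
    omega
  · rw [if_neg hab, if_neg hab]
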